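/- Let X be a metric space, P ⊆ X a compact subset, and (A_i, B_i)_{i<n} a finite sequence of pairs of disjoint closed subsets of X. Then the sequence (P ∩ A_i, P ∩ B_i)_{i<n} is inessential in P (that is, there exist sets L_i, each a partition of P between P ∩ A_i and P ∩ B_i, with ⋂_{i<n} L_i = ∅) if and only if there exist open sets U_i, V_i ⊆ X for i < n with A_i ⊆ U_i, B_i ⊆ V_i, U_i ∩ V_i = ∅, and P ∩ ⋂_{i<n} (X ∖ (U_i ∪ V_i)) = ∅. -/

import Mathlib

/-- `L` is a partition of the whole space `X` between `A` and `B`: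
`L = X ∖ (U ∪ V)` for some disjoint open `U, V` with `A ⊆ U` and `B ⊆ V`. -/
def IsPartitionBetween {X : Type*} [TopologicalSpace X] (L A B : Set X) : Prop :=
  ∃ U V : Set X, IsOpen U ∧ IsOpen V ∧ Disjoint U V ∧ A ⊆ U ∧ B ⊆ V ∧ L = (U ∪ V)ᶜ

/-- For a compact `P ⊆ X` and pairs `(Aᵢ, Bᵢ)` of disjoint closed subsets of
`X`, the sequence `(P ∩ Aᵢ, P ∩ Bᵢ)` is inessential in the subspace `P` iff
there are disjoint open sets `Uᵢ, Vᵢ ⊆ X` with `Aᵢ ⊆ Uᵢ`, `Bᵢ ⊆ Vᵢ`, and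
`P ∩ ⋂ᵢ (X ∖ (Uᵢ ∪ Vᵢ)) = ∅`. -/
theorem inessential_iff_open_separation
    {X : Type*} [MetricSpace X] (P : Set X) (hP : IsCompact P)
    (n : ℕ) (A B : Fin n → Set X)
    (hA : ∀ i, IsClosed (A i)) (hB : ∀ i, IsClosed (B i))
    (hAB : ∀ i, Disjoint (A i) (B i)) :
    (∃ L : Fin n → Set ↥P,
        (∀ i, IsPartitionBetween (L i)
          ((↑) ⁻¹' (A i) : Set ↥P) ((↑) ⁻¹' (B i) : Set ↥P)) ∧
        (⋂ i, L i) = ∅) ↔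
    (∃ U V : Fin n → Set X,
        (∀ i, IsOpen (U i) ∧ IsOpen (V i) ∧ A i ⊆ U i ∧ B i ⊆ V i ∧
          Disjoint (U i) (V i)) ∧
        P ∩ ⋂ i, (U i ∪ V i)ᶜ = ∅) := by
  constructor
  · rintro ⟨L, hL, hLempty⟩
    -- extract open sets in `X` inducing the subspace-open sets of each partition
    choose U' V' hU' hV' hdisj hAU hBV hLeq using hL
    have hind : ∀ i, ∃ Ut : Set X, IsOpen Ut ∧ ((↑) ⁻¹' Ut : Set ↥P) = U' i := by
      intro i; exact isOpen_induced_iff.1 (hU' i)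
    have hind' : ∀ i, ∃ Vt : Set X, IsOpen Vt ∧ ((↑) ⁻¹' Vt : Set ↥P) = V' i := by
      intro i; exact isOpen_induced_iff.1 (hV' i)
    choose Ut hUto hUt using hind
    choose Vt hVto hVt using hind'
    -- `P` is covered by the `Ut i` and `Vt i`
    have hcover : P ⊆ ⋃ z : Fin n × Bool, (if z.2 then Ut z.1 else Vt z.1) := by
      intro x hx
      have : (⟨x, hx⟩ : ↥P) ∉ (⋂ i, L i) := by rw [hLempty]; exact Set.notMem_empty _
      rw [Set.mem_iInter] at this
      push_neg at this
      obtain ⟨i, hi⟩ := this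
      rw [hLeq i] at hi
      have : (⟨x, hx⟩ : ↥P) ∈ U' i ∪ V' i := by
        simp only [Set.mem_compl_iff, not_not] at hi; exact hi
      rcases this with h | h
      · exact Set.mem_iUnion.2 ⟨(i, true), by rw [← hUt i] at h; simpa using h⟩
      · exact Set.mem_iUnion.2 ⟨(i, false), by rw [← hVt i] at h; simpa using h⟩
    -- shrink to a closed cover
    obtain ⟨w, hwcov, hwclosed, hwsub⟩ :=
      exists_subset_iUnion_closed_subset (s := P)
        (u := fun z : Fin n × Bool => if z.2 then Ut z.1 else Vt z.1)
        hP.isClosed (fun z => by split <;> [exact hUto _; exact hVto _])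
        (fun x _ => Set.toFinite _) hcover
    set D : Fin n → Set X := fun i => w (i, true) ∩ P with hD
    set E : Fin n → Set X := fun i => w (i, false) ∩ P with hE
    have hDU : ∀ i, D i ⊆ P ∩ Ut i := by
      intro i x hx
      exact ⟨hx.2, by simpa using hwsub (i, true) hx.1⟩
    have hEV : ∀ i, E i ⊆ P ∩ Vt i := by
      intro i x hx
      exact ⟨hx.2, by simpa using hwsub (i, false) hx.1⟩
    -- key disjointness facts, via disjointness of `U' i` and `V' i`
    have hPUV : ∀ i, P ∩ Ut i ∩ (P ∩ Vt i) = ∅ := by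
      intro i
      ext x
      simp only [Set.mem_inter_iff, Set.mem_empty_iff_false, iff_false]
      rintro ⟨⟨hxP, hxU⟩, -, hxV⟩
      have h1 : (⟨x, hxP⟩ : ↥P) ∈ U' i := by rw [← hUt i]; exact hxU
      have h2 : (⟨x, hxP⟩ : ↥P) ∈ V' i := by rw [← hVt i]; exact hxV
      exact (hdisj i).le_bot ⟨h1, h2⟩ |>.elim
    have hAUt : ∀ i, P ∩ A i ⊆ P ∩ Ut i := by
      intro i x hx
      refine ⟨hx.1, ?_⟩
      have : (⟨x, hx.1⟩ : ↥P) ∈ U' i := hAU i hx.2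
      rw [← hUt i] at this; exact this
    have hBVt : ∀ i, P ∩ B i ⊆ P ∩ Vt i := by
      intro i x hx
      refine ⟨hx.1, ?_⟩
      have : (⟨x, hx.1⟩ : ↥P) ∈ V' i := hBV i hx.2
      rw [← hVt i] at this; exact this
    -- the enlarged disjoint closed pairs
    have hdisjAE : ∀ i, Disjoint (A i ∪ D i) (B i ∪ E i) := by
      intro i
      rw [Set.disjoint_iff_inter_eq_empty]
      ext x
      simp only [Set.mem_inter_iff, Set.mem_union, Set.mem_empty_iff_false, iff_false]
      rintro ⟨h1, h2⟩
      have hxPU : x ∈ P ∩ Ut i := by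
        rcases h1 with h | h
        · rcases h2 with h' | h'
          · exact ((hAB i).le_bot ⟨h, h'⟩).elim
          · exact hAUt i ⟨(hEV i h').1, h⟩
        · exact hDU i h
      have hxPV : x ∈ P ∩ Vt i := by
        rcases h2 with h | h
        · exact hBVt i ⟨hxPU.1, h⟩
        · exact hEV i h
      have : x ∈ (∅ : Set X) := by rw [← hPUV i]; exact ⟨hxPU, hxPV⟩
      exact this
    have hclosedD : ∀ i, IsClosed (D i) := fun i => (hwclosed _).inter hP.isClosed
    have hclosedE : ∀ i, IsClosed (E i) := fun i => (hwclosed _).inter hP.isClosed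
    -- separate by open sets (normality of metric spaces)
    have hsep : ∀ i, ∃ U V : Set X, IsOpen U ∧ IsOpen V ∧ (A i ∪ D i) ⊆ U ∧
        (B i ∪ E i) ⊆ V ∧ Disjoint U V := by
      intro i
      obtain ⟨U, V, hUo, hVo, hsub1, hsub2, hUV⟩ :=
        normal_separation ((hA i).union (hclosedD i)) ((hB i).union (hclosedE i)) (hdisjAE i)
      exact ⟨U, V, hUo, hVo, hsub1, hsub2, hUV⟩
    choose U V hUo hVo hsubAU hsubBV hUV using hsep
    refine ⟨U, V, fun i => ⟨hUo i, hVo i, (Set.subset_union_left).trans (hsubAU i),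
      (Set.subset_union_left).trans (hsubBV i), hUV i⟩, ?_⟩
    -- emptiness: the `D i ∪ E i` cover `P`
    ext x
    simp only [Set.mem_inter_iff, Set.mem_iInter, Set.mem_compl_iff, Set.mem_union,
      Set.mem_empty_iff_false, iff_false, not_and, not_forall, not_not]
    intro hxP
    have := hwcov hxP
    rw [Set.mem_iUnion] at this
    obtain ⟨⟨i, b⟩, hz⟩ := this
    refine ⟨i, ?_⟩
    cases b with
    | true => exact Or.inl (hsubAU i (Or.inr ⟨hz, hxP⟩))
    | false => exact Or.inr (hsubBV i (Or.inr ⟨hz, hxP⟩))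
  · rintro ⟨U, V, hprops, hempty⟩
    refine ⟨fun i => (((↑) ⁻¹' (U i) : Set ↥P) ∪ ((↑) ⁻¹' (V i)))ᶜ, fun i => ?_, ?_⟩
    · obtain ⟨hUo, hVo, hAU, hBV, hUV⟩ := hprops i
      exact ⟨(↑) ⁻¹' (U i), (↑) ⁻¹' (V i), hUo.preimage continuous_subtype_val,
        hVo.preimage continuous_subtype_val, hUV.preimage _,
        fun p hp => hAU hp, fun p hp => hBV hp, rfl⟩
    · ext p
      simp only [Set.mem_iInter, Set.mem_compl_iff, Set.mem_union, Set.mem_preimage,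
        Set.mem_empty_iff_false, iff_false, not_forall, not_not]
      by_contra h
      push_neg at h
      have : (p : X) ∈ P ∩ ⋂ i, (U i ∪ V i)ᶜ := by
        refine ⟨p.2, Set.mem_iInter.2 fun i => ?_⟩
        simpa using h i
      rw [hempty] at this
      exact this
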